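/- Let $1 < p < \infty$ and $0 < s < 1/p$. For all measurable $f$ on the first quadrant $\mathcal{Q}_1 = (0,\infty)^2$ there holds $\int_{\mathcal{Q}_1} \int_0^2 \int_{x_1}^{x_1+z} \int_{x_2}^{x_2+z} \frac{|f(y_1,y_2)|^p}{z^{2+sp}}\,dy_2\,dy_1\,dz\,dx_1\,dx_2 \lesssim_{s,p} \int_{\mathcal{Q}_1} \min\{x_1,1\}^{1-sp} |f(x_1,x_2)|^p\,dx_1\,dx_2$. -/

import Mathlib

open MeasureTheory Set
open scoped ENNReal

noncomputable def eInd (x z y : ℝ) : ℝ≥0∞ := if x < y ∧ y < x + z then 1 else 0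

lemma measurable_eInd : Measurable (fun q : ℝ × ℝ × ℝ => eInd q.1 q.2.1 q.2.2) := by
  unfold eInd
  apply Measurable.ite _ measurable_const measurable_const
  simp only [setOf_and]
  exact (measurableSet_lt measurable_fst measurable_snd.snd).inter
    (measurableSet_lt measurable_snd.snd (measurable_fst.add measurable_snd.fst))

lemma measurable_eInd_comp {α : Type*} [MeasurableSpace α] {a b c : α → ℝ}
    (ha : Measurable a) (hb : Measurable b) (hc : Measurable c) :
    Measurable fun q => eInd (a q) (b q) (c q) :=
  measurable_eInd.comp (ha.prodMk (hb.prodMk hc))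

lemma eInd_ne_top (x z y : ℝ) : eInd x z y ≠ ⊤ := by
  unfold eInd; split <;> simp

lemma lintegral_eInd (z y : ℝ) :
    ∫⁻ x in Ioi (0:ℝ), eInd x z y ≤ ENNReal.ofReal (min y z) := by
  have h1 : ∀ x, eInd x z y = (Ioo (y - z) y).indicator 1 x := by
    intro x
    unfold eInd
    simp only [indicator, mem_Ioo, Pi.one_apply]
    refine if_congr ?_ rfl rfl
    constructor
    · rintro ⟨h1, h2⟩; exact ⟨by linarith, h1⟩
    · rintro ⟨h1, h2⟩; exact ⟨h2, by linarith⟩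
  simp_rw [h1]
  rw [lintegral_indicator_one measurableSet_Ioo,
    Measure.restrict_apply measurableSet_Ioo]
  rcases le_total y z with h | h
  · rw [min_eq_left h]
    refine (measure_mono (fun u hu => ?_ : _ ⊆ Ioo (0:ℝ) y)).trans_eq ?_
    · exact ⟨hu.2, hu.1.2⟩
    · rw [Real.volume_Ioo, sub_zero]
  · rw [min_eq_right h]
    refine (measure_mono inter_subset_left).trans_eq ?_
    rw [Real.volume_Ioo, sub_sub_cancel]

lemma lintegral_eInd_mul {a z : ℝ} (ha : 0 ≤ a) (F : ℝ → ℝ≥0∞) :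
    ∫⁻ y in Ioi (0:ℝ), eInd a z y * F y = ∫⁻ y in Ioo a (a + z), F y := by
  have h1 : ∀ y, eInd a z y * F y = (Ioo a (a + z)).indicator F y := by
    intro y
    unfold eInd
    by_cases h : a < y ∧ y < a + z
    · simp [indicator, mem_Ioo, h]
    · simp [indicator, mem_Ioo, h]
  simp_rw [h1]
  have hsub : Ioo a (a + z) ⊆ Ioi 0 := fun u hu => lt_of_le_of_lt ha hu.1
  rw [lintegral_indicator measurableSet_Ioo, Measure.restrict_restrict measurableSet_Ioo,
    inter_eq_left.2 hsub]

lemma head_int {r : ℝ} (hr1 : r < 1) {m : ℝ} (hm : 0 < m) :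
    ∫⁻ z in Ioo (0:ℝ) m, ENNReal.ofReal (z ^ (-r)) = ENNReal.ofReal (m ^ (1-r) / (1-r)) := by
  have hint : IntegrableOn (fun z : ℝ => z ^ (-r)) (Ioo 0 m) := by
    have := intervalIntegral.intervalIntegrable_rpow' (r := -r) (a := 0) (b := m) (by linarith)
    rwa [intervalIntegrable_iff_integrableOn_Ioo_of_le hm.le] at this
  rw [← ofReal_integral_eq_lintegral_ofReal hint ?nn]
  case nn =>
    filter_upwards [ae_restrict_mem measurableSet_Ioo] with z hz
    exact Real.rpow_nonneg hz.1.le _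
  congr 1
  rw [← integral_Ioc_eq_integral_Ioo, ← intervalIntegral.integral_of_le hm.le,
    integral_rpow (Or.inl (by linarith))]
  rw [Real.zero_rpow (by linarith)]
  norm_num
  ring_nf

lemma tail_int {r : ℝ} (hr0 : 0 < r) {m : ℝ} (hm : 0 < m) :
    ∫⁻ z in Ioi m, ENNReal.ofReal (m * z ^ (-1-r)) = ENNReal.ofReal (m ^ (1-r) / r) := by
  have hint : IntegrableOn (fun z : ℝ => m * z ^ (-1-r)) (Ioi m) :=
    (integrableOn_Ioi_rpow_of_lt (by linarith) hm).const_mul m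
  rw [← ofReal_integral_eq_lintegral_ofReal hint ?nn]
  case nn =>
    filter_upwards [ae_restrict_mem measurableSet_Ioi] with z hz
    exact mul_nonneg hm.le (Real.rpow_nonneg (hm.trans hz).le _)
  congr 1
  rw [integral_const_mul, integral_Ioi_rpow_of_lt (by linarith) hm]
  have h1 : -1 - r + 1 = -r := by ring
  have key : m ^ (1-r) = m * m ^ (-r) := by
    rw [show (1:ℝ)-r = 1 + -r by ring, Real.rpow_add hm, Real.rpow_one]
  rw [h1, neg_div_neg_eq, key]
  ring

lemma zbound {r : ℝ} (hr0 : 0 < r) (hr1 : r < 1) {y : ℝ} (hy : 0 < y) :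
    ∫⁻ z in Ioo (0:ℝ) 2,
      ENNReal.ofReal (min y z) * (ENNReal.ofReal ((z ^ (2 + r))⁻¹) * ENNReal.ofReal z)
    ≤ ENNReal.ofReal ((2 * (1/(1-r) + 1/r)) * min y 1 ^ (1 - r)) := by
  set m : ℝ := min y 2 with hmdef
  have hm0 : 0 < m := lt_min hy (by norm_num)
  have hm2 : m ≤ 2 := min_le_right _ _
  have hsplit : Ioo (0:ℝ) 2 ⊆ Ioo 0 m ∪ Ico m 2 := by
    intro z hz
    by_cases h : z < m
    · exact Or.inl ⟨hz.1, h⟩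
    · exact Or.inr ⟨not_lt.1 h, hz.2⟩
  calc ∫⁻ z in Ioo (0:ℝ) 2,
      ENNReal.ofReal (min y z) * (ENNReal.ofReal ((z ^ (2 + r))⁻¹) * ENNReal.ofReal z)
      ≤ ∫⁻ z in Ioo 0 m ∪ Ico m 2,
        ENNReal.ofReal (min y z) * (ENNReal.ofReal ((z ^ (2 + r))⁻¹) * ENNReal.ofReal z) :=
        lintegral_mono_set hsplit
    _ ≤ (∫⁻ z in Ioo (0:ℝ) m,
        ENNReal.ofReal (min y z) * (ENNReal.ofReal ((z ^ (2 + r))⁻¹) * ENNReal.ofReal z)) +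
        ∫⁻ z in Ico m 2,
        ENNReal.ofReal (min y z) * (ENNReal.ofReal ((z ^ (2 + r))⁻¹) * ENNReal.ofReal z) :=
        lintegral_union_le _ _ _
    _ ≤ ENNReal.ofReal (m ^ (1-r) / (1-r)) + ENNReal.ofReal (m ^ (1-r) / r) := by
        gcongr ?_ + ?_
        · rw [← head_int hr1 hm0]
          refine setLIntegral_mono' measurableSet_Ioo fun z hz => ?_
          have hz0 : (0:ℝ) < z := hz.1
          rw [← ENNReal.ofReal_mul (inv_nonneg.2 (Real.rpow_nonneg hz0.le _)),
            ← ENNReal.ofReal_mul (le_min hy.le hz0.le)]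
          apply ENNReal.ofReal_le_ofReal
          have hpow : z * ((z ^ (2 + r))⁻¹ * z) = z ^ (-r) := by
            rw [← Real.rpow_neg hz0.le]
            calc z * (z ^ (-(2+r)) * z) = (z^(1:ℝ) * z^(1:ℝ)) * z ^ (-(2+r)) := by
                  rw [Real.rpow_one]; ring
              _ = z ^ ((1:ℝ) + 1 + -(2+r)) := by
                  rw [Real.rpow_add hz0, Real.rpow_add hz0]
              _ = z ^ (-r) := by congr 1; ring
          calc min y z * ((z ^ (2 + r))⁻¹ * z) ≤ z * ((z ^ (2 + r))⁻¹ * z) := by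
                apply mul_le_mul_of_nonneg_right (min_le_right _ _)
                exact mul_nonneg (inv_nonneg.2 (Real.rpow_nonneg hz0.le _)) hz0.le
            _ = z ^ (-r) := hpow
        · rw [← tail_int hr0 hm0]
          calc ∫⁻ z in Ico m 2,
              ENNReal.ofReal (min y z) * (ENNReal.ofReal ((z ^ (2 + r))⁻¹) * ENNReal.ofReal z)
              ≤ ∫⁻ z in Ico m 2, ENNReal.ofReal (m * z ^ (-1-r)) := by
                refine setLIntegral_mono' measurableSet_Ico fun z hz => ?_
                have hz0 : (0:ℝ) < z := hm0.trans_le hz.1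
                rw [← ENNReal.ofReal_mul (inv_nonneg.2 (Real.rpow_nonneg hz0.le _)),
                  ← ENNReal.ofReal_mul (le_min hy.le hz0.le)]
                apply ENNReal.ofReal_le_ofReal
                have hmin : min y z ≤ m := le_min (min_le_left _ _) ((min_le_right _ _).trans hz.2.le)
                have hpow : (z ^ (2 + r))⁻¹ * z = z ^ (-1-r) := by
                  rw [← Real.rpow_neg hz0.le]
                  calc z ^ (-(2+r)) * z = z ^ (-(2+r)) * z ^ (1:ℝ) := by rw [Real.rpow_one]
                    _ = z ^ (-(2+r) + 1) := by rw [Real.rpow_add hz0]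
                    _ = z ^ (-1-r) := by congr 1; ring
                rw [hpow]
                exact mul_le_mul_of_nonneg_right hmin (Real.rpow_nonneg hz0.le _)
            _ ≤ ∫⁻ z in Ici m, ENNReal.ofReal (m * z ^ (-1-r)) :=
                lintegral_mono_set Ico_subset_Ici_self
            _ = ∫⁻ z in Ioi m, ENNReal.ofReal (m * z ^ (-1-r)) :=
                (setLIntegral_congr Ioi_ae_eq_Ici).symm
    _ ≤ _ := by
        rw [← ENNReal.ofReal_add (div_nonneg (Real.rpow_nonneg hm0.le _) (by linarith))
          (div_nonneg (Real.rpow_nonneg hm0.le _) hr0.le)]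
        apply ENNReal.ofReal_le_ofReal
        have hma : m ≤ 2 * min y 1 := by
          rcases le_total y 1 with h | h
          · rw [min_eq_left h]
            have : m ≤ y := min_le_left _ _
            linarith
          · rw [min_eq_right h]; simpa using hm2
        have hw0 : (0:ℝ) ≤ min y 1 := le_min hy.le zero_le_one
        have hkey : m ^ (1-r) ≤ 2 * min y 1 ^ (1-r) := by
          calc m ^ (1-r) ≤ (2 * min y 1) ^ (1-r) :=
                Real.rpow_le_rpow hm0.le hma (by linarith)
            _ = 2 ^ (1-r) * min y 1 ^ (1-r) := Real.mul_rpow (by norm_num) hw0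
            _ ≤ 2 ^ (1:ℝ) * min y 1 ^ (1-r) := by
                apply mul_le_mul_of_nonneg_right _ (Real.rpow_nonneg hw0 _)
                exact Real.rpow_le_rpow_of_exponent_le one_le_two (by linarith)
            _ = 2 * min y 1 ^ (1-r) := by rw [Real.rpow_one]
        have h1 : (0:ℝ) < 1 - r := by linarith
        calc m ^ (1-r) / (1-r) + m ^ (1-r) / r = m ^ (1-r) * (1/(1-r) + 1/r) := by
              field_simp
          _ ≤ (2 * min y 1 ^ (1-r)) * (1/(1-r) + 1/r) := by
              apply mul_le_mul_of_nonneg_right hkey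
              positivity
          _ = (2 * (1/(1-r) + 1/r)) * min y 1 ^ (1-r) := by ring

noncomputable def Gfun (f : ℝ → ℝ → ℝ) (p : ℝ) (y1 y2 : ℝ) : ℝ≥0∞ :=
  ENNReal.ofReal (|f y1 y2| ^ p)

noncomputable def CzFun (s p : ℝ) (z : ℝ) : ℝ≥0∞ := ENNReal.ofReal ((z ^ (2 + s * p))⁻¹)

lemma measurable_Gfun {f : ℝ → ℝ → ℝ} (hf : Measurable (Function.uncurry f)) (p : ℝ)
    {α : Type*} [MeasurableSpace α] {u v : α → ℝ} (hu : Measurable u) (hv : Measurable v) :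
    Measurable fun q => Gfun f p (u q) (v q) := by
  unfold Gfun
  have : Measurable fun q => f (u q) (v q) := hf.comp (hu.prodMk hv)
  fun_prop

lemma measurable_CzFun (s p : ℝ) {α : Type*} [MeasurableSpace α] {u : α → ℝ}
    (hu : Measurable u) : Measurable fun q => CzFun s p (u q) := by
  unfold CzFun; fun_prop

theorem stmt2 (p s : ℝ) (hp : 1 < p) (hs0 : 0 < s) (hs : s < 1 / p) :
    ∃ C : ℝ, 0 < C ∧ ∀ f : ℝ → ℝ → ℝ, Measurable (Function.uncurry f) →
      (∫⁻ x1 in Ioi (0 : ℝ), ∫⁻ x2 in Ioi (0 : ℝ), ∫⁻ z in Ioo (0 : ℝ) 2,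
        ∫⁻ y1 in Ioo x1 (x1 + z), ∫⁻ y2 in Ioo x2 (x2 + z),
          ENNReal.ofReal (|f y1 y2| ^ p / z ^ (2 + s * p)))
      ≤ ENNReal.ofReal C *
        ∫⁻ x1 in Ioi (0 : ℝ), ∫⁻ x2 in Ioi (0 : ℝ),
          ENNReal.ofReal (min x1 1 ^ (1 - s * p) * |f x1 x2| ^ p) := by
  have hp0 : (0:ℝ) < p := lt_trans one_pos hp
  have hr0 : 0 < s * p := mul_pos hs0 hp0
  have hr1 : s * p < 1 := by
    have h := mul_lt_mul_of_pos_right hs hp0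
    rwa [one_div_mul_cancel hp0.ne'] at h
  have h1r : (0:ℝ) < 1 - s * p := by linarith
  refine ⟨2 * (1/(1 - s*p) + 1/(s*p)), by positivity, ?_⟩
  intro f hf
  have hG : Measurable fun q : ℝ × ℝ => Gfun f p q.1 q.2 :=
    measurable_Gfun hf p measurable_fst measurable_snd
  have hH : Measurable fun y1 => ∫⁻ y2 in Ioi (0:ℝ), Gfun f p y1 y2 :=
    Measurable.lintegral_prod_right' hG
  -- measurability for the swaps
  have m_swap1 : ∀ x1 : ℝ, AEMeasurable
      (Function.uncurry fun x2 z => ∫⁻ y1 in Ioi (0:ℝ), ∫⁻ y2 in Ioi (0:ℝ),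
        eInd x1 z y1 * eInd x2 z y2 * Gfun f p y1 y2 * CzFun s p z)
      ((volume.restrict (Ioi 0)).prod (volume.restrict (Ioo 0 2))) := by
    intro x1
    have core : Measurable fun q : ((ℝ × ℝ) × ℝ) × ℝ =>
        eInd x1 q.1.1.2 q.1.2 * eInd q.1.1.1 q.1.1.2 q.2 * Gfun f p q.1.2 q.2 *
          CzFun s p q.1.1.2 :=
      (((measurable_eInd_comp measurable_const measurable_fst.fst.snd measurable_fst.snd).mul
        (measurable_eInd_comp measurable_fst.fst.fst measurable_fst.fst.snd measurable_snd)).mul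
        (measurable_Gfun hf p measurable_fst.snd measurable_snd)).mul
        (measurable_CzFun s p measurable_fst.fst.snd)
    exact (Measurable.lintegral_prod_right'
      (Measurable.lintegral_prod_right' core)).aemeasurable
  have m_swap2 : ∀ x1 z : ℝ, AEMeasurable
      (Function.uncurry fun x2 y1 => ∫⁻ y2 in Ioi (0:ℝ),
        eInd x1 z y1 * eInd x2 z y2 * Gfun f p y1 y2 * CzFun s p z)
      ((volume.restrict (Ioi 0)).prod (volume.restrict (Ioi 0))) := by
    intro x1 z
    have core : Measurable fun q : (ℝ × ℝ) × ℝ =>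
        eInd x1 z q.1.2 * eInd q.1.1 z q.2 * Gfun f p q.1.2 q.2 * CzFun s p z :=
      (((measurable_eInd_comp measurable_const measurable_const measurable_fst.snd).mul
        (measurable_eInd_comp measurable_fst.fst measurable_const measurable_snd)).mul
        (measurable_Gfun hf p measurable_fst.snd measurable_snd)).mul measurable_const
    exact (Measurable.lintegral_prod_right' core).aemeasurable
  have m_swap3 : ∀ x1 z y1 : ℝ, AEMeasurable
      (Function.uncurry fun x2 y2 =>
        eInd x1 z y1 * eInd x2 z y2 * Gfun f p y1 y2 * CzFun s p z)
      ((volume.restrict (Ioi 0)).prod (volume.restrict (Ioi 0))) := by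
    intro x1 z y1
    exact (((measurable_const.mul
      (measurable_eInd_comp measurable_fst measurable_const measurable_snd)).mul
      (measurable_Gfun hf p measurable_const measurable_snd)).mul
      measurable_const).aemeasurable
  have m_swap4 : AEMeasurable
      (Function.uncurry fun x1 z => ∫⁻ y1 in Ioi (0:ℝ), ∫⁻ y2 in Ioi (0:ℝ),
        eInd x1 z y1 * Gfun f p y1 y2 * CzFun s p z * ENNReal.ofReal z)
      ((volume.restrict (Ioi 0)).prod (volume.restrict (Ioo 0 2))) := by
    have core : Measurable fun q : ((ℝ × ℝ) × ℝ) × ℝ =>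
        eInd q.1.1.1 q.1.1.2 q.1.2 * Gfun f p q.1.2 q.2 * CzFun s p q.1.1.2 *
          ENNReal.ofReal q.1.1.2 :=
      (((measurable_eInd_comp measurable_fst.fst.fst measurable_fst.fst.snd
        measurable_fst.snd).mul
        (measurable_Gfun hf p measurable_fst.snd measurable_snd)).mul
        (measurable_CzFun s p measurable_fst.fst.snd)).mul
        (ENNReal.measurable_ofReal.comp measurable_fst.fst.snd)
    exact (Measurable.lintegral_prod_right'
      (Measurable.lintegral_prod_right' core)).aemeasurable
  have m_swap5 : ∀ z : ℝ, AEMeasurable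
      (Function.uncurry fun x1 y1 => ∫⁻ y2 in Ioi (0:ℝ),
        eInd x1 z y1 * Gfun f p y1 y2 * CzFun s p z * ENNReal.ofReal z)
      ((volume.restrict (Ioi 0)).prod (volume.restrict (Ioi 0))) := by
    intro z
    have core : Measurable fun q : (ℝ × ℝ) × ℝ =>
        eInd q.1.1 z q.1.2 * Gfun f p q.1.2 q.2 * CzFun s p z * ENNReal.ofReal z :=
      (((measurable_eInd_comp measurable_fst.fst measurable_const measurable_fst.snd).mul
        (measurable_Gfun hf p measurable_fst.snd measurable_snd)).mul
        measurable_const).mul measurable_const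
    exact (Measurable.lintegral_prod_right' core).aemeasurable
  have m_swap6 : AEMeasurable
      (Function.uncurry fun z y1 =>
        (ENNReal.ofReal (min y1 z) * (CzFun s p z * ENNReal.ofReal z)) *
          ∫⁻ y2 in Ioi (0:ℝ), Gfun f p y1 y2)
      ((volume.restrict (Ioo 0 2)).prod (volume.restrict (Ioi 0))) := by
    exact (((ENNReal.measurable_ofReal.comp (measurable_snd.min measurable_fst)).mul
      ((measurable_CzFun s p measurable_fst).mul
        (ENNReal.measurable_ofReal.comp measurable_fst))).mul
      (hH.comp measurable_snd)).aemeasurable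
  calc (∫⁻ x1 in Ioi (0 : ℝ), ∫⁻ x2 in Ioi (0 : ℝ), ∫⁻ z in Ioo (0 : ℝ) 2,
        ∫⁻ y1 in Ioo x1 (x1 + z), ∫⁻ y2 in Ioo x2 (x2 + z),
          ENNReal.ofReal (|f y1 y2| ^ p / z ^ (2 + s * p)))
      = ∫⁻ x1 in Ioi (0:ℝ), ∫⁻ x2 in Ioi (0:ℝ), ∫⁻ z in Ioo (0:ℝ) 2,
          ∫⁻ y1 in Ioi (0:ℝ), ∫⁻ y2 in Ioi (0:ℝ),
          eInd x1 z y1 * eInd x2 z y2 * Gfun f p y1 y2 * CzFun s p z := by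
        refine setLIntegral_congr_fun measurableSet_Ioi (fun x1 hx1 => ?_)
        refine setLIntegral_congr_fun measurableSet_Ioi (fun x2 hx2 => ?_)
        refine setLIntegral_congr_fun measurableSet_Ioo (fun z hz => ?_)
        rw [← lintegral_eInd_mul (le_of_lt hx1)]
        refine lintegral_congr fun y1 => ?_
        rw [← lintegral_eInd_mul (le_of_lt hx2)]
        rw [← lintegral_const_mul' _ _ (eInd_ne_top x1 z y1)]
        refine lintegral_congr fun y2 => ?_
        rw [div_eq_mul_inv, ENNReal.ofReal_mul (Real.rpow_nonneg (abs_nonneg _) _)]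
        show eInd x1 z y1 * (eInd x2 z y2 * (Gfun f p y1 y2 * CzFun s p z)) = _
        ring
    _ = ∫⁻ x1 in Ioi (0:ℝ), ∫⁻ z in Ioo (0:ℝ) 2, ∫⁻ x2 in Ioi (0:ℝ),
          ∫⁻ y1 in Ioi (0:ℝ), ∫⁻ y2 in Ioi (0:ℝ),
          eInd x1 z y1 * eInd x2 z y2 * Gfun f p y1 y2 * CzFun s p z :=
        lintegral_congr fun x1 => lintegral_lintegral_swap (m_swap1 x1)
    _ = ∫⁻ x1 in Ioi (0:ℝ), ∫⁻ z in Ioo (0:ℝ) 2, ∫⁻ y1 in Ioi (0:ℝ),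
          ∫⁻ x2 in Ioi (0:ℝ), ∫⁻ y2 in Ioi (0:ℝ),
          eInd x1 z y1 * eInd x2 z y2 * Gfun f p y1 y2 * CzFun s p z :=
        lintegral_congr fun x1 => lintegral_congr fun z =>
          lintegral_lintegral_swap (m_swap2 x1 z)
    _ = ∫⁻ x1 in Ioi (0:ℝ), ∫⁻ z in Ioo (0:ℝ) 2, ∫⁻ y1 in Ioi (0:ℝ),
          ∫⁻ y2 in Ioi (0:ℝ), ∫⁻ x2 in Ioi (0:ℝ),
          eInd x1 z y1 * eInd x2 z y2 * Gfun f p y1 y2 * CzFun s p z :=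
        lintegral_congr fun x1 => lintegral_congr fun z => lintegral_congr fun y1 =>
          lintegral_lintegral_swap (m_swap3 x1 z y1)
    _ ≤ ∫⁻ x1 in Ioi (0:ℝ), ∫⁻ z in Ioo (0:ℝ) 2, ∫⁻ y1 in Ioi (0:ℝ),
          ∫⁻ y2 in Ioi (0:ℝ),
          eInd x1 z y1 * Gfun f p y1 y2 * CzFun s p z * ENNReal.ofReal z := by
        refine lintegral_mono fun x1 => lintegral_mono fun z => lintegral_mono fun y1 =>
          lintegral_mono fun y2 => ?_
        calc ∫⁻ x2 in Ioi (0:ℝ), eInd x1 z y1 * eInd x2 z y2 * Gfun f p y1 y2 * CzFun s p z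
            = ∫⁻ x2 in Ioi (0:ℝ),
              eInd x2 z y2 * (eInd x1 z y1 * Gfun f p y1 y2 * CzFun s p z) :=
              lintegral_congr fun x2 => by ring
          _ = (∫⁻ x2 in Ioi (0:ℝ), eInd x2 z y2) *
              (eInd x1 z y1 * Gfun f p y1 y2 * CzFun s p z) :=
              lintegral_mul_const'' _
                (measurable_eInd_comp measurable_id measurable_const
                  measurable_const).aemeasurable
          _ ≤ ENNReal.ofReal (min y2 z) *
              (eInd x1 z y1 * Gfun f p y1 y2 * CzFun s p z) :=
              mul_le_mul_left (lintegral_eInd z y2) _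
          _ ≤ ENNReal.ofReal z * (eInd x1 z y1 * Gfun f p y1 y2 * CzFun s p z) :=
              mul_le_mul_left (ENNReal.ofReal_le_ofReal (min_le_right _ _)) _
          _ = eInd x1 z y1 * Gfun f p y1 y2 * CzFun s p z * ENNReal.ofReal z := by ring
    _ = ∫⁻ z in Ioo (0:ℝ) 2, ∫⁻ x1 in Ioi (0:ℝ), ∫⁻ y1 in Ioi (0:ℝ),
          ∫⁻ y2 in Ioi (0:ℝ),
          eInd x1 z y1 * Gfun f p y1 y2 * CzFun s p z * ENNReal.ofReal z :=
        lintegral_lintegral_swap m_swap4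
    _ = ∫⁻ z in Ioo (0:ℝ) 2, ∫⁻ y1 in Ioi (0:ℝ), ∫⁻ x1 in Ioi (0:ℝ),
          ∫⁻ y2 in Ioi (0:ℝ),
          eInd x1 z y1 * Gfun f p y1 y2 * CzFun s p z * ENNReal.ofReal z :=
        lintegral_congr fun z => lintegral_lintegral_swap (m_swap5 z)
    _ ≤ ∫⁻ z in Ioo (0:ℝ) 2, ∫⁻ y1 in Ioi (0:ℝ),
          (ENNReal.ofReal (min y1 z) * (CzFun s p z * ENNReal.ofReal z)) *
          ∫⁻ y2 in Ioi (0:ℝ), Gfun f p y1 y2 := by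
        refine lintegral_mono fun z => lintegral_mono fun y1 => ?_
        calc ∫⁻ x1 in Ioi (0:ℝ), ∫⁻ y2 in Ioi (0:ℝ),
              eInd x1 z y1 * Gfun f p y1 y2 * CzFun s p z * ENNReal.ofReal z
            = ∫⁻ x1 in Ioi (0:ℝ), eInd x1 z y1 *
              ∫⁻ y2 in Ioi (0:ℝ), Gfun f p y1 y2 * (CzFun s p z * ENNReal.ofReal z) := by
              refine lintegral_congr fun x1 => ?_
              rw [← lintegral_const_mul' _ _ (eInd_ne_top x1 z y1)]
              exact lintegral_congr fun y2 => by ring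
          _ = ∫⁻ x1 in Ioi (0:ℝ), eInd x1 z y1 *
              ((∫⁻ y2 in Ioi (0:ℝ), Gfun f p y1 y2) * (CzFun s p z * ENNReal.ofReal z)) := by
              refine lintegral_congr fun x1 => ?_
              congr 1
              exact lintegral_mul_const'' _
                (measurable_Gfun hf p measurable_const measurable_id).aemeasurable
          _ = (∫⁻ x1 in Ioi (0:ℝ), eInd x1 z y1) *
              ((∫⁻ y2 in Ioi (0:ℝ), Gfun f p y1 y2) * (CzFun s p z * ENNReal.ofReal z)) :=
              lintegral_mul_const'' _
                (measurable_eInd_comp measurable_id measurable_const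
                  measurable_const).aemeasurable
          _ ≤ ENNReal.ofReal (min y1 z) *
              ((∫⁻ y2 in Ioi (0:ℝ), Gfun f p y1 y2) * (CzFun s p z * ENNReal.ofReal z)) :=
              mul_le_mul_left (lintegral_eInd z y1) _
          _ = (ENNReal.ofReal (min y1 z) * (CzFun s p z * ENNReal.ofReal z)) *
              ∫⁻ y2 in Ioi (0:ℝ), Gfun f p y1 y2 := by ring
    _ = ∫⁻ y1 in Ioi (0:ℝ), ∫⁻ z in Ioo (0:ℝ) 2,
          (ENNReal.ofReal (min y1 z) * (CzFun s p z * ENNReal.ofReal z)) *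
          ∫⁻ y2 in Ioi (0:ℝ), Gfun f p y1 y2 :=
        lintegral_lintegral_swap m_swap6
    _ = ∫⁻ y1 in Ioi (0:ℝ),
          (∫⁻ z in Ioo (0:ℝ) 2,
            ENNReal.ofReal (min y1 z) * (CzFun s p z * ENNReal.ofReal z)) *
          ∫⁻ y2 in Ioi (0:ℝ), Gfun f p y1 y2 := by
        refine lintegral_congr fun y1 => ?_
        exact lintegral_mul_const'' _
          ((ENNReal.measurable_ofReal.comp (measurable_const.min measurable_id)).mul
            ((measurable_CzFun s p measurable_id).mul ENNReal.measurable_ofReal)).aemeasurable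
    _ ≤ ∫⁻ y1 in Ioi (0:ℝ),
          ENNReal.ofReal ((2 * (1/(1 - s*p) + 1/(s*p))) * min y1 1 ^ (1 - s*p)) *
          ∫⁻ y2 in Ioi (0:ℝ), Gfun f p y1 y2 := by
        refine lintegral_mono_ae ?_
        filter_upwards [ae_restrict_mem measurableSet_Ioi] with y1 hy1
        exact mul_le_mul_left (zbound hr0 hr1 hy1) _
    _ = ENNReal.ofReal (2 * (1/(1 - s*p) + 1/(s*p))) *
        ∫⁻ x1 in Ioi (0 : ℝ), ∫⁻ x2 in Ioi (0 : ℝ),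
          ENNReal.ofReal (min x1 1 ^ (1 - s * p) * |f x1 x2| ^ p) := by
        rw [← lintegral_const_mul' _ _ ENNReal.ofReal_ne_top]
        refine setLIntegral_congr_fun measurableSet_Ioi (fun y1 hy1 => ?_)
        have hw : 0 ≤ min y1 1 ^ (1 - s*p) :=
          Real.rpow_nonneg (le_min (le_of_lt hy1) zero_le_one) _
        rw [ENNReal.ofReal_mul (by positivity), mul_assoc]
        congr 1
        rw [← lintegral_const_mul' _ _ ENNReal.ofReal_ne_top]
        refine lintegral_congr fun y2 => ?_
        simp only [Gfun]
        rw [← ENNReal.ofReal_mul hw]
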